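/- For all m ≥ −1, K_{m+3} = K_{m+1} K_m K_{m+1}, where K_m denotes the m-th singular word of the Fibonacci word. -/

import Mathlib

/-- Finite Fibonacci words, shifted: `FwS 0 = F₋₁ = b`, `FwS (m+1) = F_m`
(`F₀ = a`, `F₁ = ab`, `F_{m+1} = F_m F_{m-1}`), letters `a = false`, `b = true`. -/
def FwS : ℕ → List Bool
  | 0 => [true]
  | 1 => [false]
  | n + 2 => FwS (n + 1) ++ FwS n

/-- `del n` is the letter `δ_n` (the last letter of `F_n`): `a` iff `n` is even. -/
def del (n : ℕ) : Bool := if Even n then false else true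

/-- `singK n = K_{n-1}`, the `(n-1)`-st singular word (so `n` ranges over `ℕ`
as the paper's index ranges over `m ≥ -1`):
`K_m = δ_{m+1} · F_m[1, f_m − 1]`. -/
def singK (n : ℕ) : List Bool := del n :: (FwS n).dropLast

lemma del_add_two (n : ℕ) : del (n + 2) = del n := by
  simp [del, Nat.even_add_one, Nat.even_add]

lemma fwS_ne_nil : ∀ n, FwS n ≠ []
  | 0 => by simp [FwS]
  | 1 => by simp [FwS]
  | n + 2 => by simp [FwS, fwS_ne_nil n]

lemma lastLem : ∀ n, FwS n = (FwS n).dropLast ++ [del (n + 1)]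
  | 0 => by simp [FwS, del]
  | 1 => by decide
  | n + 2 => by
    rw [show n + 2 + 1 = n + 1 + 2 from rfl, del_add_two]
    show FwS (n + 1) ++ FwS n = (FwS (n + 1) ++ FwS n).dropLast ++ [del (n + 1)]
    rw [List.dropLast_append_of_ne_nil (fwS_ne_nil n), List.append_assoc,
      ← lastLem n]

/-- `K_{m+3} = K_{m+1} K_m K_{m+1}` for all `m ≥ -1` (here `n = m + 1`). -/
theorem stmt_6 (n : ℕ) :
    singK (n + 3) = singK (n + 1) ++ singK n ++ singK (n + 1) := by
  have h3 : FwS (n + 3) = FwS (n + 1) ++ FwS n ++ FwS (n + 1) := by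
    show FwS (n + 2) ++ FwS (n + 1) = _
    rw [show FwS (n + 2) = FwS (n + 1) ++ FwS n from rfl]
  simp only [singK, h3, del_add_two,
    List.dropLast_append_of_ne_nil (fwS_ne_nil (n + 1))]
  rw [show FwS (n + 1) ++ FwS n =
      ((FwS (n + 1)).dropLast ++ [del (n + 1 + 1)]) ++
      ((FwS n).dropLast ++ [del (n + 1)]) by rw [← lastLem, ← lastLem],
    del_add_two]
  simp
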